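/- Let k be a difference field, R a k-σ-algebra, and K a difference field extension of k. Then R is σ-separable over k if and only if R ⊗_k K is σ-separable over K. -/

import Mathlib

open TensorProduct

/-- The diagonal endomorphism `σ(a ⊗ b) = σ(a) ⊗ σ(b)` of `A ⊗_k B` is injective
(i.e. `A ⊗_k B` is σ-reduced): any ring endomorphism satisfying the defining rule
on pure tensors is injective. -/
def SigmaReducedTensor (k A B : Type) [CommRing k] [CommRing A] [CommRing B]
    [Algebra k A] [Algebra k B] (σA : A →+* A) (σB : B →+* B) : Prop :=
  ∀ τ : (A ⊗[k] B) →+* A ⊗[k] B,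
    (∀ (a : A) (b : B), τ (a ⊗ₜ[k] b) = σA a ⊗ₜ[k] σB b) → Function.Injective τ

/-- A `k`-σ-algebra `R` is σ-separable over `k` if `R ⊗_k K` is σ-reduced for
every difference field extension `K` of `k`. -/
def IsSigmaSeparable (k R : Type) [Field k] [CommRing R] [Algebra k R]
    (σk : k →+* k) (σR : R →+* R) : Prop :=
  ∀ (K : Type) [Field K] [Algebra k K], ∀ σK : K →+* K,
    (∀ x : k, σK (algebraMap k K x) = algebraMap k K (σk x)) →
    SigmaReducedTensor k K R σK σR


theorem exists_tau (k A B : Type*) [CommRing k] [CommRing A] [CommRing B]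
    [Algebra k A] [Algebra k B] (σk : k →+* k) (σA : A →+* A) (σB : B →+* B)
    (hA : ∀ x : k, σA (algebraMap k A x) = algebraMap k A (σk x))
    (hB : ∀ x : k, σB (algebraMap k B x) = algebraMap k B (σk x)) :
    ∃ τ : (A ⊗[k] B) →+* A ⊗[k] B, ∀ (a : A) (b : B), τ (a ⊗ₜ[k] b) = σA a ⊗ₜ[k] σB b := by
  classical
  let fb : A → B →+ A ⊗[k] B := fun a => AddMonoidHom.mk'
    (fun b => σA a ⊗ₜ[k] σB b) (fun b₁ b₂ => by simp only [map_add, tmul_add])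
  let f : A →+ B →+ A ⊗[k] B := AddMonoidHom.mk' fb
    (fun a₁ a₂ => by ext b; simp [fb, map_add, add_tmul])
  have hbal : ∀ (c : k) (a : A) (b : B), f (c • a) b = f a (c • b) := by
    intro c a b
    show σA (c • a) ⊗ₜ[k] σB b = σA a ⊗ₜ[k] σB (c • b)
    rw [Algebra.smul_def, Algebra.smul_def, map_mul, map_mul, hA, hB,
      ← Algebra.smul_def, ← Algebra.smul_def, smul_tmul]
  let τ₀ : A ⊗[k] B →+ A ⊗[k] B := liftAddHom f hbal
  have hτ₀ : ∀ (a : A) (b : B), τ₀ (a ⊗ₜ[k] b) = σA a ⊗ₜ[k] σB b := fun a b =>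
    liftAddHom_tmul f hbal a b
  have hmul : ∀ x y : A ⊗[k] B, τ₀ (x * y) = τ₀ x * τ₀ y := by
    intro x y
    induction x using TensorProduct.induction_on with
    | zero => simp
    | add u v hu hv => rw [add_mul, map_add, map_add, hu, hv, add_mul]
    | tmul a b =>
      induction y using TensorProduct.induction_on with
      | zero => simp
      | add u v hu hv => rw [mul_add, map_add, map_add, hu, hv, mul_add]
      | tmul a' b' =>
        rw [Algebra.TensorProduct.tmul_mul_tmul, hτ₀, hτ₀, hτ₀,
          Algebra.TensorProduct.tmul_mul_tmul, map_mul, map_mul]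
  refine ⟨{ toFun := τ₀, map_one' := ?_, map_mul' := hmul, map_zero' := map_zero τ₀,
            map_add' := map_add τ₀ }, hτ₀⟩
  show τ₀ ((1 : A) ⊗ₜ[k] (1 : B)) = 1
  rw [hτ₀, map_one, map_one]
  rfl


private def sigmaPow {K : Type} [Field K] (σ : K →+* K) : ℕ → (K →+* K)
  | 0 => RingHom.id K
  | n + 1 => (sigmaPow σ n).comp σ

private theorem sigmaPow_add {K : Type} [Field K] (σ : K →+* K) (m n : ℕ) (x : K) :
    sigmaPow σ (m + n) x = sigmaPow σ m (sigmaPow σ n x) := by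
  induction n generalizing x with
  | zero => rfl
  | succ n ih =>
    show sigmaPow σ (m + n) (σ x) = _
    rw [ih (σ x)]
    rfl

private theorem sigmaPow_comm {K : Type} [Field K] (σ : K →+* K) (n : ℕ) (x : K) :
    σ (sigmaPow σ n x) = sigmaPow σ n (σ x) := by
  induction n generalizing x with
  | zero => rfl
  | succ n ih =>
    show σ (sigmaPow σ n (σ x)) = sigmaPow σ n (σ (σ x))
    exact ih (σ x)

theorem exists_inversive (K : Type) [Field K] (σK : K →+* K) :
    ∃ (M : Type) (_ : Field M) (_ : Algebra K M) (σM : M →+* M),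
      (∀ x : K, σM (algebraMap K M x) = algebraMap K M (σK x)) ∧ Function.Surjective σM := by
  classical
  let G : ℕ → Type := fun _ => K
  let f' : ∀ i j : ℕ, i ≤ j → G i →+* G j := fun i j _ => sigmaPow σK (j - i)
  haveI : DirectedSystem G (fun i j h => f' i j h) := by
    constructor
    · intro i x
      show sigmaPow σK (i - i) x = x
      rw [Nat.sub_self]
      rfl
    · intro kk j i hij hjk x
      show sigmaPow σK (kk - j) (sigmaPow σK (j - i) x) = sigmaPow σK (kk - i) x
      rw [← sigmaPow_add, Nat.sub_add_sub_cancel hjk hij]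
  letI M := Ring.DirectLimit G (fun i j h => f' i j h)
  letI : Field M := Field.DirectLimit.field G f'
  let ofi : ∀ i : ℕ, K →+* M := fun i => Ring.DirectLimit.of G (fun i j h => f' i j h) i
  have hof : ∀ (i j : ℕ) (hij : i ≤ j) (x : K), ofi j (f' i j hij x) = ofi i x :=
    fun i j hij x => Ring.DirectLimit.of_f (G := G) (f := fun i j h => f' i j h) hij x
  letI : Algebra K M := (ofi 0).toAlgebra
  have halg : algebraMap K M = ofi 0 := rfl
  let σM : M →+* M := Ring.DirectLimit.lift G (fun i j h => f' i j h) M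
    (fun i => (ofi i).comp σK)
    (by
      intro i j hij x
      show ofi j (σK (sigmaPow σK (j - i) x)) = ofi i (σK x)
      rw [sigmaPow_comm]
      exact hof i j hij (σK x))
  have hσM : ∀ (i : ℕ) (x : K), σM (ofi i x) = ofi i (σK x) := fun i x =>
    Ring.DirectLimit.lift_of (G := G) (f := fun i j h => f' i j h) (P := M) _ _ i x
  refine ⟨M, inferInstance, inferInstance, σM, fun x => by rw [halg]; exact hσM 0 x, ?_⟩
  intro z
  obtain ⟨i, x, rfl⟩ := Ring.DirectLimit.exists_of z
  refine ⟨ofi (i + 1) x, ?_⟩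
  rw [hσM]
  have h1 : σK x = f' i (i + 1) (Nat.le_succ i) x := by
    show σK x = sigmaPow σK (i + 1 - i) x
    rw [Nat.succ_sub le_rfl, Nat.sub_self]
    rfl
  rw [h1]
  exact hof i (i + 1) (Nat.le_succ i) x


set_option maxHeartbeats 1000000 in
set_option synthInstance.maxHeartbeats 200000 in
/-- The canonical `K`-algebra iso `M ⊗[K] (K ⊗[k] R) ≃ M ⊗[k] R`. -/
noncomputable def cancelAlg (k K M R : Type) [Field k] [Field K] [Field M] [CommRing R]
    [Algebra k K] [Algebra k R] [Algebra K M] [Algebra k M] [IsScalarTower k K M] :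
    (M ⊗[K] (K ⊗[k] R)) ≃ₐ[K] M ⊗[k] R :=
  Algebra.TensorProduct.algEquivOfLinearEquivTensorProduct
    (TensorProduct.AlgebraTensorModule.cancelBaseChange k K K M R)
    (by
      intro m₁ m₂ t₁ t₂
      induction t₁ using TensorProduct.induction_on with
      | zero =>
        rw [zero_mul, tmul_zero, tmul_zero, map_zero, zero_mul]
      | add u v hu hv => simp only [add_mul, tmul_add, map_add, hu, hv]
      | tmul c₁ r₁ =>
        induction t₂ using TensorProduct.induction_on with
        | zero => rw [mul_zero, tmul_zero, tmul_zero, map_zero, mul_zero]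
        | add u v hu hv => simp only [mul_add, tmul_add, map_add, hu, hv]
        | tmul c₂ r₂ =>
          rw [Algebra.TensorProduct.tmul_mul_tmul,
            TensorProduct.AlgebraTensorModule.cancelBaseChange_tmul k K K,
            TensorProduct.AlgebraTensorModule.cancelBaseChange_tmul k K K,
            TensorProduct.AlgebraTensorModule.cancelBaseChange_tmul k K K,
            Algebra.TensorProduct.tmul_mul_tmul]
          rw [smul_mul_smul_comm])
    (by
      rw [Algebra.TensorProduct.one_def,
        TensorProduct.AlgebraTensorModule.cancelBaseChange_tmul k K K, one_smul,
        Algebra.TensorProduct.one_def])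

theorem cancelAlg_tmul (k K M R : Type) [Field k] [Field K] [Field M] [CommRing R]
    [Algebra k K] [Algebra k R] [Algebra K M] [Algebra k M] [IsScalarTower k K M]
    (m : M) (c : K) (r : R) :
    cancelAlg k K M R (m ⊗ₜ[K] (c ⊗ₜ[k] r)) = (c • m) ⊗ₜ[k] r :=
  TensorProduct.AlgebraTensorModule.cancelBaseChange_tmul k K K m r c

theorem cancelAlg_symm_tmul (k K M R : Type) [Field k] [Field K] [Field M] [CommRing R]
    [Algebra k K] [Algebra k R] [Algebra K M] [Algebra k M] [IsScalarTower k K M]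
    (m : M) (r : R) :
    (cancelAlg k K M R).symm (m ⊗ₜ[k] r) = m ⊗ₜ[K] ((1 : K) ⊗ₜ[k] r) := by
  apply (cancelAlg k K M R).injective
  rw [AlgEquiv.apply_symm_apply, cancelAlg_tmul, one_smul]


private theorem forward_dir
    (k R K : Type) [Field k] [CommRing R] [Algebra k R] [Field K] [Algebra k K]
    (σk : k →+* k) (σR : R →+* R) (σK : K →+* K)
    (hcompR : ∀ x : k, σR (algebraMap k R x) = algebraMap k R (σk x))
    (hcompK : ∀ x : k, σK (algebraMap k K x) = algebraMap k K (σk x))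
    (σT : (K ⊗[k] R) →+* K ⊗[k] R)
    (hσT : ∀ (a : K) (r : R), σT (a ⊗ₜ[k] r) = σK a ⊗ₜ[k] σR r)
    (hsep : IsSigmaSeparable k R σk σR) :
    IsSigmaSeparable K (K ⊗[k] R) σK σT := by
  intro M _ _ σM hcompM τ hτ
  letI : Algebra k M := ((algebraMap K M).comp (algebraMap k K)).toAlgebra
  haveI : IsScalarTower k K M := IsScalarTower.of_algebraMap_eq fun x => rfl
  set e := cancelAlg k K M R with he
  let τ' : (M ⊗[k] R) →+* M ⊗[k] R :=
    ((e : M ⊗[K] (K ⊗[k] R) ≃+* M ⊗[k] R) : (M ⊗[K] (K ⊗[k] R)) →+* M ⊗[k] R).comp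
      (τ.comp ((e.symm : M ⊗[k] R ≃+* M ⊗[K] (K ⊗[k] R)) : (M ⊗[k] R) →+* M ⊗[K] (K ⊗[k] R)))
  have hτ' : ∀ (a : M) (r : R), τ' (a ⊗ₜ[k] r) = σM a ⊗ₜ[k] σR r := by
    intro a r
    show e (τ (e.symm (a ⊗ₜ[k] r))) = σM a ⊗ₜ[k] σR r
    rw [cancelAlg_symm_tmul, hτ, hσT, map_one, cancelAlg_tmul, one_smul]
  have hcompM' : ∀ x : k, σM (algebraMap k M x) = algebraMap k M (σk x) := by
    intro x
    show σM (algebraMap K M (algebraMap k K x)) = algebraMap K M (algebraMap k K (σk x))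
    rw [hcompM, hcompK]
  have hinj' : Function.Injective τ' := hsep M σM hcompM' τ' hτ'
  intro x y hxy
  have : τ' (e x) = τ' (e y) := by
    show e (τ (e.symm (e x))) = e (τ (e.symm (e y)))
    rw [e.symm_apply_apply, e.symm_apply_apply, hxy]
  exact e.injective (hinj' this)

set_option maxHeartbeats 2000000 in
set_option synthInstance.maxHeartbeats 400000 in
private theorem backward_dir
    (k R K : Type) [Field k] [CommRing R] [Algebra k R] [Field K] [Algebra k K]
    (σk : k →+* k) (σR : R →+* R) (σK : K →+* K)
    (hcompR : ∀ x : k, σR (algebraMap k R x) = algebraMap k R (σk x))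
    (hcompK : ∀ x : k, σK (algebraMap k K x) = algebraMap k K (σk x))
    (σT : (K ⊗[k] R) →+* K ⊗[k] R)
    (hσT : ∀ (a : K) (r : R), σT (a ⊗ₜ[k] r) = σK a ⊗ₜ[k] σR r)
    (hsep : IsSigmaSeparable K (K ⊗[k] R) σK σT) :
    IsSigmaSeparable k R σk σR := by
  intro L _ _ σL hcompL τ hτ
  suffices h : ∀ x : L ⊗[k] R, τ x = 0 → x = 0 by
    intro x y hxy
    have := h (x - y) (by rw [map_sub, hxy, sub_self])
    exact sub_eq_zero.mp this
  intro x hx0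
  by_contra hxne
  classical
  -- bases
  let bR := Module.Basis.ofVectorSpace k R
  let bL := Module.Basis.ofVectorSpace k L
  let bM := Algebra.TensorProduct.basis L bR
  set lam := bM.repr x with hlam
  have hlamne : lam ≠ 0 := fun h =>
    hxne ((LinearEquiv.map_eq_zero_iff bM.repr).mp h)
  obtain ⟨j₀, hj₀⟩ := Finsupp.support_nonempty_iff.mpr hlamne
  set F := lam.support with hF
  have hlamj₀ : lam j₀ ≠ 0 := Finsupp.mem_support_iff.mp hj₀
  -- x as a sum of pure tensors
  have hxsum : (∑ j ∈ F, lam j ⊗ₜ[k] (bR j : R)) = x := by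
    conv_rhs => rw [← bM.linearCombination_repr x]
    rw [Finsupp.linearCombination_apply, Finsupp.sum]
    exact Finset.sum_congr rfl fun j _ =>
      (Algebra.TensorProduct.basis_repr_symm_apply' bR (lam j) j).symm
  -- coefficient matrix
  set C : _ → _ → k := fun i j => bR.repr (σR (bR j)) i with hC
  -- the linear equations over L
  have heq : ∀ i, (∑ j ∈ F, σL (lam j) * algebraMap k L (C i j)) = 0 := by
    intro i
    have h0 : bM.repr (τ x) = 0 := by rw [hx0, map_zero]
    have hτx : τ x = ∑ j ∈ F, σL (lam j) ⊗ₜ[k] σR (bR j) := by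
      rw [← hxsum, map_sum]
      exact Finset.sum_congr rfl fun j _ => hτ _ _
    rw [hτx, map_sum] at h0
    have h1 := DFunLike.congr_fun h0 i
    rw [Finsupp.finset_sum_apply, Finsupp.zero_apply] at h1
    rw [← h1]
    refine Finset.sum_congr rfl fun j _ => ?_
    rw [Algebra.TensorProduct.basis_repr_tmul, Finsupp.smul_apply, Finsupp.mapRange_apply]
    rw [smul_eq_mul]
  -- normalize
  have hσlj₀ : σL (lam j₀) ≠ 0 := fun h =>
    hlamj₀ (RingHom.injective σL (by rw [h, map_zero]))
  set μ : _ → L := fun j => σL (lam j) * (σL (lam j₀))⁻¹ with hμ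
  have hμeq : ∀ i, (∑ j ∈ F, C i j • μ j) = 0 := by
    intro i
    have h2 : (∑ j ∈ F, σL (lam j) * algebraMap k L (C i j)) * (σL (lam j₀))⁻¹ = 0 := by
      rw [heq i, zero_mul]
    rw [Finset.sum_mul] at h2
    rw [← h2]
    refine Finset.sum_congr rfl fun j _ => ?_
    rw [Algebra.smul_def, hμ]
    ring
  have hμj₀ : μ j₀ = 1 := mul_inv_cancel₀ hσlj₀
  -- coordinates over bL
  have hd : ∀ i t, (∑ j ∈ F, C i j * (bL.repr (μ j) t)) = 0 := by
    intro i t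
    have h1 : bL.repr (∑ j ∈ F, C i j • μ j) = 0 := by rw [hμeq i, map_zero]
    rw [map_sum] at h1
    have h2 := DFunLike.congr_fun h1 t
    rw [Finsupp.finset_sum_apply, Finsupp.zero_apply] at h2
    rw [← h2]
    refine Finset.sum_congr rfl fun j _ => ?_
    rw [map_smul, Finsupp.smul_apply, smul_eq_mul]
  -- choose a coordinate where μ j₀ = 1 is visible
  have hμrepr : bL.repr (μ j₀) ≠ 0 := by
    rw [hμj₀]
    exact fun h => one_ne_zero ((LinearEquiv.map_eq_zero_iff bL.repr).mp h)
  obtain ⟨t₀, ht₀⟩ : ∃ t, bL.repr (μ j₀) t ≠ 0 := by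
    by_contra hall
    push_neg at hall
    exact hμrepr (Finsupp.ext fun t => hall t)
  set w : _ → k := fun j => bL.repr (μ j) t₀ with hw
  have hw0 : w j₀ ≠ 0 := ht₀
  -- the relation in R
  have hrel : (∑ j ∈ F, w j • σR (bR j : R)) = 0 := by
    apply bR.repr.injective
    rw [map_sum, map_zero]
    refine Finsupp.ext fun i => ?_
    rw [Finsupp.finset_sum_apply, Finsupp.zero_apply]
    rw [← hd i t₀]
    refine Finset.sum_congr rfl fun j _ => ?_
    rw [map_smul, Finsupp.smul_apply, smul_eq_mul, mul_comm]
  -- pass to an inversive extension M of K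
  obtain ⟨M, fM, aM, σM, hcompM, hsurj⟩ := exists_inversive K σK
  have hcompT : ∀ c : K, σT (algebraMap K (K ⊗[k] R) c) = algebraMap K (K ⊗[k] R) (σK c) := by
    intro c
    rw [Algebra.TensorProduct.algebraMap_apply, Algebra.TensorProduct.algebraMap_apply,
      Algebra.algebraMap_self, RingHom.id_apply, RingHom.id_apply, hσT, map_one]
  obtain ⟨τM, hτM⟩ := exists_tau K M (K ⊗[k] R) σK σM σT hcompM hcompT
  choose u hu using hsurj
  set cc : _ → K := fun j => algebraMap k K (w j) with hcc
  set uu : _ → M := fun j => u (algebraMap K M (cc j)) with huu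
  let bT := Algebra.TensorProduct.basis K bR
  let bMT := Algebra.TensorProduct.basis M bT
  set X : M ⊗[K] (K ⊗[k] R) := ∑ j ∈ F, uu j ⊗ₜ[K] (bT j) with hX
  have huuj₀ : uu j₀ ≠ 0 := by
    intro h
    have h1 : σM (uu j₀) = algebraMap K M (cc j₀) := hu _
    rw [h, map_zero] at h1
    have h2 : cc j₀ = 0 := RingHom.injective (algebraMap K M) (by rw [← h1, map_zero])
    exact hw0 (RingHom.injective (algebraMap k K) (by rw [map_zero]; exact h2))
  have hXne : X ≠ 0 := by
    intro h
    have h1 : bMT.repr X j₀ = uu j₀ := by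
      rw [hX, map_sum]
      rw [Finsupp.finset_sum_apply]
      rw [Finset.sum_eq_single j₀]
      · rw [← Algebra.TensorProduct.basis_repr_symm_apply' bT (uu j₀) j₀, map_smul,
          Module.Basis.repr_self, Finsupp.smul_apply, Finsupp.single_eq_same, smul_eq_mul, mul_one]
      · intro j _ hjne
        rw [← Algebra.TensorProduct.basis_repr_symm_apply' bT (uu j) j, map_smul,
          Module.Basis.repr_self, Finsupp.smul_apply, Finsupp.single_eq_of_ne hjne.symm, smul_zero]
      · intro hnot
        exact absurd hj₀ hnot
    rw [h, map_zero, Finsupp.zero_apply] at h1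
    exact huuj₀ h1.symm
  have hτMX : τM X = 0 := by
    rw [hX, map_sum]
    have hterm : ∀ j ∈ F, τM (uu j ⊗ₜ[K] (bT j)) =
        (1 : M) ⊗ₜ[K] ((1 : K) ⊗ₜ[k] (w j • σR (bR j : R))) := by
      intro j _
      rw [hτM, hu]
      have hbT : bT j = (1 : K) ⊗ₜ[k] (bR j : R) := Algebra.TensorProduct.basis_apply bR j
      rw [hbT, hσT, map_one]
      have e1 : algebraMap K M (cc j) ⊗ₜ[K] ((1 : K) ⊗ₜ[k] σR (bR j : R)) =
          cc j • ((1 : M) ⊗ₜ[K] ((1 : K) ⊗ₜ[k] σR (bR j : R))) := by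
        rw [TensorProduct.smul_tmul', Algebra.algebraMap_eq_smul_one]
      rw [e1, ← TensorProduct.tmul_smul]
      congr 1
      have e2 : cc j • ((1 : K) ⊗ₜ[k] σR (bR j : R)) =
          algebraMap k K (w j) ⊗ₜ[k] σR (bR j : R) := by
        rw [TensorProduct.smul_tmul', smul_eq_mul, mul_one, hcc]
      have e3 : algebraMap k K (w j) ⊗ₜ[k] σR (bR j : R) =
          w j • ((1 : K) ⊗ₜ[k] σR (bR j : R)) := by
        rw [TensorProduct.smul_tmul', Algebra.algebraMap_eq_smul_one]
      rw [e2, e3, TensorProduct.tmul_smul]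
    rw [Finset.sum_congr rfl hterm, ← TensorProduct.tmul_sum, ← TensorProduct.tmul_sum, hrel,
      TensorProduct.tmul_zero, TensorProduct.tmul_zero]
  have hinj := hsep M σM hcompM τM hτM
  exact hXne (hinj (by rw [hτMX, map_zero]))


/-- `R` is σ-separable over `k` if and only if `R ⊗_k K` is σ-separable over `K`,
for any difference field extension `K|k`. Here `σ_T` is the diagonal endomorphism
of `K ⊗_k R`. -/
theorem strongly_etale_stmt5
    (k R K : Type) [Field k] [CommRing R] [Algebra k R] [Field K] [Algebra k K]
    (σk : k →+* k) (σR : R →+* R) (σK : K →+* K)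
    (hcompR : ∀ x : k, σR (algebraMap k R x) = algebraMap k R (σk x))
    (hcompK : ∀ x : k, σK (algebraMap k K x) = algebraMap k K (σk x))
    (σT : (K ⊗[k] R) →+* K ⊗[k] R)
    (hσT : ∀ (a : K) (r : R), σT (a ⊗ₜ[k] r) = σK a ⊗ₜ[k] σR r) :
    IsSigmaSeparable k R σk σR ↔ IsSigmaSeparable K (K ⊗[k] R) σK σT :=
  ⟨forward_dir k R K σk σR σK hcompR hcompK σT hσT,
   backward_dir k R K σk σR σK hcompR hcompK σT hσT⟩
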